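/- Let φ: F → G be a simple fold with F = F₁ ∪ F₂ ∪ F₃ and Gᵢ = φ(Fᵢ). Suppose G is connected and ∂G₁ ≠ ∅ ≠ ∂G₃. Then there is a connected component C of F such that φ(C) meets both ∂G₁ and ∂G₃; moreover for any such component, φ(C) = G. -/

import Mathlib

open Set Topology

/-- A subset of a space is *regular* if it is closed and has finitely many connected
components, each of which is non-degenerate. -/
def IsRegularSet {G : Type*} [TopologicalSpace G] (A : Set G) : Prop :=
  IsClosed A ∧ {C : Set G | ∃ x ∈ A, C = connectedComponentIn A x}.Finite ∧
    ∀ x ∈ A, (connectedComponentIn A x).Nontrivial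

/-- A point of a graph is *ordinary* (neither a branch point nor an endpoint) if it has an
open neighborhood homeomorphic to an open interval. -/
def IsOrdinaryPoint {G : Type*} [TopologicalSpace G] (x : G) : Prop :=
  ∃ U : Set G, IsOpen U ∧ x ∈ U ∧ Nonempty (U ≃ₜ Set.Ioo (0 : ℝ) 1)

/-- A topological space is a *graph* if it is a finite union of arcs which intersect
at most in endpoints. -/
def IsGraphSpace (G : Type*) [TopologicalSpace G] : Prop :=
  ∃ (n : ℕ) (f : Fin n → unitInterval → G),
    (∀ i, Continuous (f i) ∧ Function.Injective (f i)) ∧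
    (⋃ i, Set.range (f i)) = Set.univ ∧
    ∀ i j, i ≠ j →
      Set.range (f i) ∩ Set.range (f j) ⊆ ({f i 0, f i 1} : Set G) ∩ {f j 0, f j 1}

/-- A subset of a space is a *graph* if it is a finite union of arcs which intersect
at most in endpoints. -/
def IsGraphSet {E : Type*} [TopologicalSpace E] (G : Set E) : Prop :=
  ∃ (n : ℕ) (f : Fin n → unitInterval → E),
    (∀ i, Continuous (f i) ∧ Function.Injective (f i)) ∧
    G = ⋃ i, Set.range (f i) ∧
    ∀ i j, i ≠ j →
      Set.range (f i) ∩ Set.range (f j) ⊆ ({f i 0, f i 1} : Set E) ∩ {f j 0, f j 1}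

/-- `φ` restricted to `A` is a homeomorphism onto `B`. -/
def MapsHomeoOnto {F G : Type*} [TopologicalSpace F] [TopologicalSpace G]
    (φ : F → G) (A : Set F) (B : Set G) : Prop :=
  φ '' A = B ∧ Topology.IsEmbedding (A.restrict φ)

/-- A *simple fold* on `G`, with pieces `F1, F2, F3` of `F` and projection `φ : F → G`,
satisfying properties (F1)-(F5). -/
def IsSimpleFold {F G : Type*} [TopologicalSpace F] [TopologicalSpace G]
    (φ : F → G) (F1 F2 F3 : Set F) : Prop :=
  Continuous φ ∧ F1 ∪ F2 ∪ F3 = Set.univ ∧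
  -- (F1)
  ((φ '' F1).Nonempty ∧ (φ '' F2).Nonempty ∧ (φ '' F3).Nonempty) ∧
  (IsRegularSet (φ '' F1) ∧ IsRegularSet (φ '' F2) ∧ IsRegularSet (φ '' F3)) ∧
  -- (F2)
  (φ '' F1) ∪ (φ '' F3) = Set.univ ∧ (φ '' F2) = (φ '' F1) ∩ (φ '' F3) ∧
  -- (F3)
  closure ((φ '' F1) \ (φ '' F2)) ∩ closure ((φ '' F3) \ (φ '' F2)) = ∅ ∧
  -- (F4)
  (MapsHomeoOnto φ F1 (φ '' F1) ∧ MapsHomeoOnto φ F2 (φ '' F2) ∧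
    MapsHomeoOnto φ F3 (φ '' F3)) ∧
  -- (F5)
  frontier (φ '' F1) = φ '' (F1 ∩ F2) ∧ frontier (φ '' F3) = φ '' (F2 ∩ F3) ∧
  F1 ∩ F3 = ∅

/-- `S` separates `A` from `B` within `Y`: the complement `Y \ S` is the union of two
disjoint sets, relatively open in `Y \ S`, containing `A` and `B` respectively. -/
def SeparatesWithin {E : Type*} [TopologicalSpace E] (Y S A B : Set E) : Prop :=
  ∃ U V : Set E,
    U ∪ V = Y \ S ∧ U ∩ V = ∅ ∧ A ⊆ U ∧ B ⊆ V ∧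
    (∃ U', IsOpen U' ∧ U = (Y \ S) ∩ U') ∧ (∃ V', IsOpen V' ∧ V = (Y \ S) ∩ V')

/-- `A` has *consistent complement relative to* `B`: for each component `C` of the
complement of `A`, either `∂C ⊆ B` or `∂C ∩ B = ∅`. -/
def ConsistentComplement {G : Type*} [TopologicalSpace G] (A B : Set G) : Prop :=
  ∀ x ∉ A, frontier (connectedComponentIn Aᶜ x) ⊆ B ∨
    frontier (connectedComponentIn Aᶜ x) ∩ B = ∅

/-- The *`A` side of `B`*, `σ_B(A)`: the closure of the union of all components of
`G \ B` meeting `A`. -/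
def sideOf {G : Type*} [TopologicalSpace G] (B A : Set G) : Set G :=
  closure (⋃ x ∈ {x : G | x ∉ B ∧ (connectedComponentIn Bᶜ x ∩ A).Nonempty},
    connectedComponentIn Bᶜ x)

/-- A subset of `G × [0,1]` is *straight* if it is closed, the projection is injective on
it, and its projection is regular. -/
def IsStraight {G : Type*} [TopologicalSpace G] (S : Set (G × unitInterval)) : Prop :=
  IsClosed S ∧ Set.InjOn Prod.fst S ∧ IsRegularSet (Prod.fst '' S)

/-- The *end set* of a straight set. -/
def endSet {G : Type*} [TopologicalSpace G] (S : Set (G × unitInterval)) :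
    Set (G × unitInterval) :=
  S ∩ Prod.fst ⁻¹' (frontier (Prod.fst '' S))

/-- A *stairwell structure* of height `k` for `S ⊆ G × [0,1]`, given by the pieces
`Sp 1, …, Sp k` with end set decompositions `E(Sp i) = α i ∪ β i`. -/
def IsStairwell {G : Type*} [TopologicalSpace G]
    (Sp α β : ℕ → Set (G × unitInterval)) (k : ℕ) (S : Set (G × unitInterval)) : Prop :=
  1 ≤ k ∧
  -- (S1)
  (∀ i ∈ Set.Icc 1 k, (Sp i).Nonempty ∧ IsStraight (Sp i)) ∧
  S = ⋃ i ∈ Set.Icc 1 k, Sp i ∧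
  -- (S2)
  (∀ i ∈ Set.Icc 1 k, endSet (Sp i) = α i ∪ β i ∧ α i ∩ β i = ∅ ∧
    (α i).Finite ∧ (β i).Finite) ∧
  α 1 = ∅ ∧ β k = ∅ ∧ (∀ i, 1 ≤ i → i < k → β i = α (i + 1)) ∧
  -- (S3)
  (∀ i, 1 ≤ i → i < k → ∃ V : Set G, IsOpen V ∧ Prod.fst '' β i ⊆ V ∧
    Prod.fst '' Sp i ∩ V = Prod.fst '' Sp (i + 1) ∩ V) ∧
  -- (S4)
  (∀ i ∈ Set.Icc 1 k, ConsistentComplement (Prod.fst '' Sp i) (Prod.fst '' α i) ∧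
    ConsistentComplement (Prod.fst '' Sp i) (Prod.fst '' β i)) ∧
  -- (S5)
  (∀ i ∈ Set.Icc 2 k, ∀ p ∈ α i, IsOrdinaryPoint p.1) ∧
  (∀ i j, 2 ≤ i → i < j → j ≤ k → Prod.fst '' α i ∩ Prod.fst '' α j = ∅)

/-- A *broken stairwell structure* of height `k` with a pit at level `i0`. -/
def IsBrokenStairwell {G : Type*} [TopologicalSpace G]
    (Sp α β : ℕ → Set (G × unitInterval)) (γ P1 P2 : Set (G × unitInterval))
    (k i0 : ℕ) (S : Set (G × unitInterval)) : Prop :=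
  1 ≤ k ∧ 1 ≤ i0 ∧ i0 ≤ k ∧
  -- (S1')
  (∀ i ∈ Set.Icc 1 k, (Sp i).Nonempty ∧ IsStraight (Sp i)) ∧
  P1.Nonempty ∧ IsStraight P1 ∧ P2.Nonempty ∧ IsStraight P2 ∧
  S = (⋃ i ∈ Set.Icc 1 k, Sp i) ∪ P1 ∪ P2 ∧
  -- (S2')
  (∀ i ∈ Set.Icc 1 k, i ≠ i0 → endSet (Sp i) = α i ∪ β i) ∧
  endSet (Sp i0) = α i0 ∪ β i0 ∪ γ ∧
  (∀ i ∈ Set.Icc 1 k, α i ∩ β i = ∅ ∧ (α i).Finite ∧ (β i).Finite) ∧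
  γ.Finite ∧ α i0 ∩ γ = ∅ ∧ β i0 ∩ γ = ∅ ∧
  α 1 = ∅ ∧ β k = ∅ ∧ (∀ i, 1 ≤ i → i < k → β i = α (i + 1)) ∧
  endSet P2 = endSet P1 ∪ γ ∧ endSet P1 ∩ γ = ∅ ∧
  -- (S3')
  (∀ i, 1 ≤ i → i < k → ∃ V : Set G, IsOpen V ∧ Prod.fst '' β i ⊆ V ∧
    Prod.fst '' Sp i ∩ V = Prod.fst '' Sp (i + 1) ∩ V) ∧
  (∃ V : Set G, IsOpen V ∧ Prod.fst '' endSet P1 ⊆ V ∧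
    Prod.fst '' P1 ∩ V = Prod.fst '' P2 ∩ V) ∧
  (∃ W : Set G, IsOpen W ∧ Prod.fst '' γ ⊆ W ∧
    Prod.fst '' P2 ∩ W = Prod.fst '' Sp i0 ∩ W) ∧
  -- (S4')
  (∀ i ∈ Set.Icc 1 k, ConsistentComplement (Prod.fst '' Sp i) (Prod.fst '' α i) ∧
    ConsistentComplement (Prod.fst '' Sp i) (Prod.fst '' β i)) ∧
  ConsistentComplement (Prod.fst '' Sp i0) (Prod.fst '' γ) ∧
  ConsistentComplement (Prod.fst '' P2) (Prod.fst '' endSet P1) ∧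
  ConsistentComplement (Prod.fst '' P2) (Prod.fst '' γ) ∧
  -- (S5')
  (∀ i ∈ Set.Icc 2 k, ∀ p ∈ α i, IsOrdinaryPoint p.1) ∧
  (∀ p ∈ endSet P1, IsOrdinaryPoint p.1) ∧ (∀ p ∈ γ, IsOrdinaryPoint p.1) ∧
  (∀ i j, 2 ≤ i → i < j → j ≤ k → Prod.fst '' α i ∩ Prod.fst '' α j = ∅) ∧
  (∀ i ∈ Set.Icc 2 k, Prod.fst '' α i ∩ Prod.fst '' endSet P1 = ∅ ∧
    Prod.fst '' α i ∩ Prod.fst '' γ = ∅) ∧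
  Prod.fst '' endSet P1 ∩ Prod.fst '' γ = ∅ ∧
  -- (S6')
  Prod.fst '' α i0 ∩ Prod.fst '' (P1 ∪ P2) = ∅

/-- A compactum is *hereditarily indecomposable* if every non-degenerate subcontinuum is
indecomposable, i.e. is not the union of two proper subcontinua. -/
def HereditarilyIndecomposable (X : Type*) [TopologicalSpace X] : Prop :=
  ∀ K : Set X, IsCompact K → IsConnected K → K.Nontrivial →
    ¬ ∃ A B : Set X, IsCompact A ∧ IsConnected A ∧ IsCompact B ∧ IsConnected B ∧
      A ∪ B = K ∧ A ≠ K ∧ B ≠ K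

/-- A continuum is *arc-like* if for every `ε > 0` it admits an `ε`-map onto `[0,1]`. -/
def ArcLike (X : Type*) [MetricSpace X] : Prop :=
  ∀ ε > (0 : ℝ), ∃ f : X → unitInterval, Continuous f ∧ Function.Surjective f ∧
    ∀ y, Metric.diam (f ⁻¹' {y}) < ε

/-- A continuum has *span zero* if every subcontinuum `Z ⊆ X × X` with
`π₁(Z) ⊆ π₂(Z)` meets the diagonal. -/
def SpanZero (X : Type*) [TopologicalSpace X] : Prop :=
  ∀ Z : Set (X × X), IsCompact Z → IsConnected Z →
    Prod.fst '' Z ⊆ Prod.snd '' Z → ∃ x, (x, x) ∈ Z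


namespace Stmt5Aux

open Topology

variable {F G : Type*} [TopologicalSpace F] [TopologicalSpace G]

/-- A preconnected set meeting a clopen set is contained in it. -/
lemma preconn_subset_clopen {C S : Set F} (hC : IsClopen C) (hS : IsPreconnected S)
    (hne : (S ∩ C).Nonempty) : S ⊆ C := by
  by_contra hsub
  obtain ⟨z, hzS, hzC⟩ := Set.not_subset.1 hsub
  have hcov : S ⊆ C ∪ Cᶜ := by
    intro s _
    rcases em (s ∈ C) with hs | hs
    · exact Set.mem_union_left _ hs
    · exact Set.mem_union_right _ hs
  obtain ⟨w, -, hw1, hw2⟩ := hS C Cᶜ hC.2 hC.1.isOpen_compl hcov hne ⟨z, hzS, hzC⟩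
  exact hw2 hw1

/-- In a graph space, connected components are clopen. -/
lemma isClopen_cc_of_graph [T2Space F] (hF : IsGraphSpace F) (x : F) :
    IsClopen (connectedComponent x) := by
  obtain ⟨n, f, hf, hcov, -⟩ := hF
  refine ⟨isClosed_connectedComponent, ?_⟩
  rw [← isClosed_compl_iff]
  have heq : (connectedComponent x)ᶜ =
      ⋃ i ∈ {i : Fin n | Set.range (f i) ∩ connectedComponent x = ∅}, Set.range (f i) := by
    ext z
    simp only [Set.mem_compl_iff, Set.mem_iUnion, Set.mem_setOf_eq]
    constructor
    · intro hz
      have hzmem : z ∈ ⋃ i, Set.range (f i) := by rw [hcov]; trivial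
      obtain ⟨i, hi⟩ := Set.mem_iUnion.1 hzmem
      refine ⟨i, ?_, hi⟩
      by_contra hne
      obtain ⟨w, hw1, hw2⟩ := Set.nonempty_iff_ne_empty.2 hne
      have hsc : Set.range (f i) ⊆ connectedComponent w :=
        (isPreconnected_range (hf i).1).subset_connectedComponent hw1
      rw [← connectedComponent_eq hw2] at hsc
      exact hz (hsc hi)
    · rintro ⟨i, hdisj, hi⟩ hz
      exact Set.eq_empty_iff_forall_notMem.1 hdisj z ⟨hi, hz⟩
  rw [heq]
  exact (Set.toFinite _).isClosed_biUnion fun i _ => (isCompact_range (hf i).1).isClosed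

lemma isClosed_ccIn {A : Set G} (hA : IsClosed A) (x : G) :
    IsClosed (connectedComponentIn A x) := by
  by_cases hx : x ∈ A
  · rw [connectedComponentIn_eq_image hx]
    exact hA.isClosedMap_subtype_val _ isClosed_connectedComponent
  · rw [connectedComponentIn_eq_empty hx]
    exact isClosed_empty

/-- A connected component of a closed set with finitely many components is
relatively open. -/
lemma ccIn_relopen {A : Set G} (hA : IsClosed A)
    (hfin : {C : Set G | ∃ y ∈ A, C = connectedComponentIn A y}.Finite)
    {x : G} (hx : x ∈ A) :
    ∃ U : Set G, IsOpen U ∧ connectedComponentIn A x = U ∩ A := by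
  have hKcl : IsClosed
      (⋃₀ ({C : Set G | ∃ y ∈ A, C = connectedComponentIn A y} \ {connectedComponentIn A x})) := by
    rw [Set.sUnion_eq_biUnion]
    refine (hfin.subset Set.diff_subset).isClosed_biUnion ?_
    rintro T ⟨⟨y, hyA, rfl⟩, -⟩
    exact isClosed_ccIn hA y
  refine ⟨(⋃₀ ({C : Set G | ∃ y ∈ A, C = connectedComponentIn A y} \
      {connectedComponentIn A x}))ᶜ, hKcl.isOpen_compl, ?_⟩
  ext z
  constructor
  · intro hz
    have hzA : z ∈ A := connectedComponentIn_subset _ _ hz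
    refine ⟨?_, hzA⟩
    rintro ⟨T, ⟨⟨y, hyA, rfl⟩, hTne⟩, hzT⟩
    refine hTne ?_
    rw [Set.mem_singleton_iff]
    exact (connectedComponentIn_eq hzT).trans (connectedComponentIn_eq hz).symm
  · rintro ⟨hzK, hzA⟩
    by_cases hzcc : connectedComponentIn A z = connectedComponentIn A x
    · rw [← hzcc]; exact mem_connectedComponentIn hzA
    · exact absurd ⟨connectedComponentIn A z, ⟨⟨z, hzA, rfl⟩, hzcc⟩,
        mem_connectedComponentIn hzA⟩ hzK

lemma injOn_of_emb {φ : F → G} {A : Set F} (hem : Topology.IsEmbedding (A.restrict φ)) :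
    Set.InjOn φ A :=
  Set.injOn_iff_injective.2 hem.injective

/-- The image of a relatively open piece under the fold restriction is relatively open. -/
lemma image_piece_relopen {φ : F → G} {A : Set F} (hem : Topology.IsEmbedding (A.restrict φ))
    {C : Set F} (hCo : IsOpen C) :
    ∃ U : Set G, IsOpen U ∧ φ '' (C ∩ A) = U ∩ φ '' A := by
  have hT : IsOpen (Subtype.val ⁻¹' C : Set A) := hCo.preimage continuous_subtype_val
  obtain ⟨U, hUo, hU⟩ := hem.toIsInducing.isOpen_iff.1 hT
  refine ⟨U, hUo, ?_⟩
  ext y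
  constructor
  · rintro ⟨v, ⟨hvC, hvA⟩, rfl⟩
    have hmem : (⟨v, hvA⟩ : A) ∈ (Subtype.val ⁻¹' C : Set A) := hvC
    rw [← hU] at hmem
    exact ⟨hmem, ⟨v, hvA, rfl⟩⟩
  · rintro ⟨hyU, v, hvA, rfl⟩
    have hmem : (⟨v, hvA⟩ : A) ∈ (A.restrict φ) ⁻¹' U := hyU
    rw [hU] at hmem
    exact ⟨v, ⟨hmem, hvA⟩, rfl⟩

/-- Preimages (within a fold piece) of preconnected sets are preconnected. -/
lemma preconn_preimage {φ : F → G} {A : Set F} (hem : Topology.IsEmbedding (A.restrict φ))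
    {P : Set G} (hP : IsPreconnected P) (hPA : P ⊆ φ '' A) :
    IsPreconnected (A ∩ φ ⁻¹' P) := by
  have h1 : IsPreconnected ((A.restrict φ) ⁻¹' P) := by
    rw [← hem.toIsInducing.isPreconnected_image]
    have himg : (A.restrict φ) '' ((A.restrict φ) ⁻¹' P) = P := by
      rw [Set.image_preimage_eq_inter_range, show Set.range (A.restrict φ) = φ '' A from Set.range_domRestrict φ A]
      exact Set.inter_eq_self_of_subset_left hPA
    rw [himg]; exact hP
  have h2 : Subtype.val '' ((A.restrict φ) ⁻¹' P) = A ∩ φ ⁻¹' P := by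
    ext v
    constructor
    · rintro ⟨s, hs, rfl⟩; exact ⟨s.2, hs⟩
    · rintro ⟨hvA, hvP⟩; exact ⟨⟨v, hvA⟩, hvP, rfl⟩
  rw [← h2]
  exact IsInducing.subtypeVal.isPreconnected_image.2 h1

/-- If a point of a piece is interior to the image of the whole piece, then it is
interior to the image of any clopen chunk containing it. -/
lemma interior_piece {φ : F → G} {A : Set F} (hem : Topology.IsEmbedding (A.restrict φ))
    {C : Set F} (hCo : IsOpen C) {x' : F} (hx'C : x' ∈ C) (hx'A : x' ∈ A)
    (hyi : φ x' ∈ interior (φ '' A)) :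
    φ x' ∈ interior (φ '' C) := by
  obtain ⟨U, hUo, hA⟩ := image_piece_relopen hem hCo
  have hyU : φ x' ∈ U := by
    have hmem : φ x' ∈ φ '' (C ∩ A) := ⟨x', ⟨hx'C, hx'A⟩, rfl⟩
    rw [hA] at hmem; exact hmem.1
  rw [mem_interior]
  refine ⟨interior (φ '' A) ∩ U, ?_, isOpen_interior.inter hUo, hyi, hyU⟩
  intro v hv
  have hmem : v ∈ φ '' (C ∩ A) := by rw [hA]; exact ⟨hv.2, interior_subset hv.1⟩
  exact Set.image_mono Set.inter_subset_left hmem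

lemma compl_eq {G1 G2 G3 : Set G} (hcov : G1 ∪ G3 = Set.univ) (h2 : G2 = G1 ∩ G3) :
    G1ᶜ = G3 \ G2 := by
  ext z
  simp only [Set.mem_compl_iff, Set.mem_diff, h2, Set.mem_inter_iff]
  constructor
  · intro hz
    have hz3 : z ∈ G3 := by
      have hzu : z ∈ G1 ∪ G3 := by rw [hcov]; trivial
      rcases hzu with hm | hm
      · exact absurd hm hz
      · exact hm
    exact ⟨hz3, fun hpair => hz hpair.1⟩
  · rintro ⟨hz3, hz2⟩ hz1
    exact hz2 ⟨hz1, hz3⟩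

/-- Near a point of `∂G₁`, the graph lies in `G₃` and `G₁` agrees with `G₂`. -/
lemma frontier_nbhd {G1 G2 G3 : Set G} (hcov : G1 ∪ G3 = Set.univ) (h2 : G2 = G1 ∩ G3)
    (hsep : closure (G1 \ G2) ∩ closure (G3 \ G2) = ∅) {y : G} (hy : y ∈ frontier G1) :
    ∃ N : Set G, IsOpen N ∧ y ∈ N ∧ N ⊆ G3 ∧ ∀ v ∈ N, v ∈ G1 → v ∈ G2 := by
  have hyc : y ∈ closure (G3 \ G2) := by
    rw [← compl_eq hcov h2]
    rw [frontier_eq_closure_inter_closure] at hy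
    exact hy.2
  have hyn : y ∉ closure (G1 \ G2) := fun hmem =>
    Set.eq_empty_iff_forall_notMem.1 hsep y ⟨hmem, hyc⟩
  refine ⟨(closure (G1 \ G2))ᶜ, isClosed_closure.isOpen_compl, hyn, ?_, ?_⟩
  · intro v hv
    by_cases hv2 : v ∈ G2
    · rw [h2] at hv2; exact hv2.2
    · by_cases hv1 : v ∈ G1
      · exact absurd (subset_closure (show v ∈ G1 \ G2 from ⟨hv1, hv2⟩)) hv
      · have hvu : v ∈ G1 ∪ G3 := by rw [hcov]; trivial
        rcases hvu with hm | hm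
        · exact absurd hm hv1
        · exact hm
  · intro v hv hv1
    by_contra hv2
    exact hv (subset_closure (show v ∈ G1 \ G2 from ⟨hv1, hv2⟩))

lemma fold_symm {φ : F → G} {F1 F2 F3 : Set F} (h : IsSimpleFold φ F1 F2 F3) :
    IsSimpleFold φ F3 F2 F1 := by
  obtain ⟨hcont, hcovF, ⟨hn1, hn2, hn3⟩, ⟨hr1, hr2, hr3⟩, hcovG, hG2, hsep,
    ⟨hh1, hh2, hh3⟩, hfr1, hfr3, h13⟩ := h
  refine ⟨hcont, ?_, ⟨hn3, hn2, hn1⟩, ⟨hr3, hr2, hr1⟩, ?_, ?_, ?_, ⟨hh3, hh2, hh1⟩, ?_, ?_, ?_⟩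
  · rw [← hcovF]; ext z; simp only [Set.mem_union]; tauto
  · rw [← hcovG]; exact Set.union_comm _ _
  · rw [hG2]; exact Set.inter_comm _ _
  · rw [← hsep]; exact Set.inter_comm _ _
  · rw [hfr3, Set.inter_comm]
  · rw [hfr1, Set.inter_comm]
  · rw [← h13]; exact Set.inter_comm _ _

/-- The key trapping lemma: if a clopen connected set `C` has a non-`F₃` sheet over a
point `y ∈ ∂G₁` but no `F₃`-sheet over `y`, then `φ '' C` is contained in the component
of `G₂` through `y`, so it misses `∂G₃`. -/
lemma trap {φ : F → G} {F1 F2 F3 : Set F} (h : IsSimpleFold φ F1 F2 F3)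
    {C : Set F} (hC : IsClopen C) (hCp : IsPreconnected C)
    {y : G} (hy : y ∈ frontier (φ '' F1)) {a : F} (haC : a ∈ C) (haF : a ∈ F1 ∪ F2)
    (haφ : φ a = y) (hc : ∀ c ∈ C, c ∈ F3 → φ c ≠ y) :
    φ '' C ∩ frontier (φ '' F3) = ∅ := by
  obtain ⟨hcont, hcovF, hne, ⟨hreg1, hreg2, hreg3⟩, hcovG, hG2, hsep,
    ⟨hh1, hh2, hh3⟩, hfr1, hfr3, h13⟩ := h
  have ha2 : a ∈ F2 := by
    rcases haF with h1' | h2'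
    · have hmem : y ∈ φ '' (F1 ∩ F2) := by rw [← hfr1]; exact hy
      obtain ⟨e, ⟨he1, he2⟩, heφ⟩ := hmem
      have hae : a = e := injOn_of_emb hh1.2 h1' he1 (by rw [haφ, heφ])
      rw [hae]; exact he2
    · exact h2'
  have hyG2 : y ∈ φ '' F2 := ⟨a, ha2, haφ⟩
  have hG2sub3 : φ '' F2 ⊆ φ '' F3 := by rw [hG2]; exact Set.inter_subset_right
  have hG2sub1 : φ '' F2 ⊆ φ '' F1 := by rw [hG2]; exact Set.inter_subset_left
  have hyG3 : y ∈ φ '' F3 := hG2sub3 hyG2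
  have hPy : y ∈ connectedComponentIn (φ '' F2) y := mem_connectedComponentIn hyG2
  have hRy : y ∈ connectedComponentIn (φ '' F3) y := mem_connectedComponentIn hyG3
  have hPsub : connectedComponentIn (φ '' F2) y ⊆ φ '' F2 := connectedComponentIn_subset _ _
  have hRsub : connectedComponentIn (φ '' F3) y ⊆ φ '' F3 := connectedComponentIn_subset _ _
  have hPR : connectedComponentIn (φ '' F2) y ⊆ connectedComponentIn (φ '' F3) y :=
    isPreconnected_connectedComponentIn.subset_connectedComponentIn hPy (hPsub.trans hG2sub3)
  have hPcl : IsClosed (connectedComponentIn (φ '' F2) y) := isClosed_ccIn hreg2.1 y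
  obtain ⟨UP, hUPo, hPeq⟩ := ccIn_relopen hreg2.1 hreg2.2.1 hyG2
  obtain ⟨UR, hURo, hReq⟩ := ccIn_relopen hreg3.1 hreg3.2.1 hyG3
  -- Step 1: no F₃-sheet of C lies over R
  have hstep1 : ∀ v ∈ C, v ∈ F3 → φ v ∉ connectedComponentIn (φ '' F3) y := by
    intro v hvC hv3 hvR
    have hRt : IsPreconnected (F3 ∩ φ ⁻¹' connectedComponentIn (φ '' F3) y) :=
      preconn_preimage hh3.2 isPreconnected_connectedComponentIn hRsub
    obtain ⟨c0, hc03, hc0φ⟩ := hyG3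
    have hsub : F3 ∩ φ ⁻¹' connectedComponentIn (φ '' F3) y ⊆ C :=
      preconn_subset_clopen hC hRt ⟨v, ⟨hv3, hvR⟩, hvC⟩
    exact hc c0 (hsub ⟨hc03, by rw [Set.mem_preimage, hc0φ]; exact hRy⟩) hc03 hc0φ
  -- Step 2: the component P of G₂ through y misses ∂G₃
  have hstep2 : frontier (φ '' F3) ∩ connectedComponentIn (φ '' F2) y = ∅ := by
    rw [Set.eq_empty_iff_forall_notMem]
    rintro z ⟨hzfr, hzP⟩
    have hmem : z ∈ φ '' (F2 ∩ F3) := by rw [← hfr3]; exact hzfr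
    obtain ⟨a', ⟨ha'2, ha'3⟩, ha'φ⟩ := hmem
    have hPt : IsPreconnected (F2 ∩ φ ⁻¹' connectedComponentIn (φ '' F2) y) :=
      preconn_preimage hh2.2 isPreconnected_connectedComponentIn hPsub
    have hsub : F2 ∩ φ ⁻¹' connectedComponentIn (φ '' F2) y ⊆ C :=
      preconn_subset_clopen hC hPt
        ⟨a, ⟨ha2, by rw [Set.mem_preimage, haφ]; exact hPy⟩, haC⟩
    have ha'C : a' ∈ C := hsub ⟨ha'2, by rw [Set.mem_preimage, ha'φ]; exact hzP⟩
    exact hstep1 a' ha'C ha'3 (by rw [ha'φ]; exact hPR hzP)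
  -- Step 3: local control neighborhoods around points of P
  have hM : ∀ w ∈ connectedComponentIn (φ '' F2) y, ∃ M : Set G, IsOpen M ∧ w ∈ M ∧
      (∀ v ∈ M, v ∈ φ '' F1 → v ∈ connectedComponentIn (φ '' F2) y) ∧
      (∀ v ∈ M, v ∈ φ '' F2 → v ∈ connectedComponentIn (φ '' F2) y) ∧
      (∀ v ∈ M, v ∈ φ '' F3 → v ∈ connectedComponentIn (φ '' F3) y) := by
    intro w hw
    have hwUP : w ∈ UP := by rw [hPeq] at hw; exact hw.1
    have hwUR : w ∈ UR := by
      have hwR := hPR hw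
      rw [hReq] at hwR; exact hwR.1
    have hsubP : ∀ v ∈ UP, v ∈ φ '' F2 → v ∈ connectedComponentIn (φ '' F2) y :=
      fun v hv h2' => by rw [hPeq]; exact ⟨hv, h2'⟩
    have hsubR : ∀ v ∈ UR, v ∈ φ '' F3 → v ∈ connectedComponentIn (φ '' F3) y :=
      fun v hv h3' => by rw [hReq]; exact ⟨hv, h3'⟩
    by_cases hint : w ∈ interior (φ '' F2)
    · refine ⟨UP ∩ UR ∩ interior (φ '' F2), (hUPo.inter hURo).inter isOpen_interior,
        ⟨⟨hwUP, hwUR⟩, hint⟩, ?_, ?_, ?_⟩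
      · intro v hv _; exact hsubP v hv.1.1 (interior_subset hv.2)
      · intro v hv h2'; exact hsubP v hv.1.1 h2'
      · intro v hv h3'; exact hsubR v hv.1.2 h3'
    · have hwG2 : w ∈ φ '' F2 := hPsub hw
      have hwfr : w ∈ frontier (φ '' F1) := by
        have hw1 : w ∈ φ '' F1 := hG2sub1 hwG2
        have hw3 : w ∈ φ '' F3 := hG2sub3 hwG2
        have hint2 : interior (φ '' F2) = interior (φ '' F1) ∩ interior (φ '' F3) := by
          rw [hG2, interior_inter]
        by_cases hw1i : w ∈ interior (φ '' F1)
        · have hw3i : w ∉ interior (φ '' F3) := fun hw3i => hint (by rw [hint2]; exact ⟨hw1i, hw3i⟩)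
          have hwfr3 : w ∈ frontier (φ '' F3) := by
            rw [hreg3.1.frontier_eq]; exact ⟨hw3, hw3i⟩
          exact (Set.eq_empty_iff_forall_notMem.1 hstep2 w ⟨hwfr3, hw⟩).elim
        · rw [hreg1.1.frontier_eq]; exact ⟨hw1, hw1i⟩
      obtain ⟨N, hNo, hwN, hNG3, hNG12⟩ := frontier_nbhd hcovG hG2 hsep hwfr
      refine ⟨UP ∩ UR ∩ N, (hUPo.inter hURo).inter hNo, ⟨⟨hwUP, hwUR⟩, hwN⟩, ?_, ?_, ?_⟩
      · intro v hv h1'; exact hsubP v hv.1.1 (hNG12 v hv.2 h1')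
      · intro v hv h2'; exact hsubP v hv.1.1 h2'
      · intro v hv h3'; exact hsubR v hv.1.2 h3'
  -- Step 4: C is trapped over P
  choose M hMo hMw hM1 hM2 hM3 using hM
  have hVo : IsOpen (⋃ w, ⋃ hw : w ∈ connectedComponentIn (φ '' F2) y, M w hw) :=
    isOpen_iUnion fun w => isOpen_iUnion fun hw => hMo w hw
  have hCV : C ∩ φ ⁻¹' (⋃ w, ⋃ hw : w ∈ connectedComponentIn (φ '' F2) y, M w hw) ⊆
      φ ⁻¹' connectedComponentIn (φ '' F2) y := by
    rintro v ⟨hvC, hvV⟩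
    rw [Set.mem_preimage] at hvV ⊢
    simp only [Set.mem_iUnion] at hvV
    obtain ⟨w, hw, hmem⟩ := hvV
    have hvF : v ∈ F1 ∪ F2 ∪ F3 := by rw [hcovF]; trivial
    rcases hvF with (hv1 | hv2) | hv3
    · exact hM1 w hw _ hmem ⟨v, hv1, rfl⟩
    · exact hM2 w hw _ hmem ⟨v, hv2, rfl⟩
    · exact absurd (hM3 w hw _ hmem ⟨v, hv3, rfl⟩) (hstep1 v hvC hv3)
  have hsubPV : C ∩ φ ⁻¹' connectedComponentIn (φ '' F2) y ⊆
      φ ⁻¹' (⋃ w, ⋃ hw : w ∈ connectedComponentIn (φ '' F2) y, M w hw) := by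
    rintro v ⟨hvC, hvP⟩
    rw [Set.mem_preimage] at hvP ⊢
    simp only [Set.mem_iUnion]
    exact ⟨φ v, hvP, hMw _ hvP⟩
  have hCP : C ⊆ φ ⁻¹' connectedComponentIn (φ '' F2) y := by
    by_contra hnot
    obtain ⟨v, hvC, hvP⟩ := Set.not_subset.1 hnot
    have hcover : C ⊆ φ ⁻¹' (⋃ w, ⋃ hw : w ∈ connectedComponentIn (φ '' F2) y, M w hw) ∪
        (φ ⁻¹' connectedComponentIn (φ '' F2) y)ᶜ := by
      intro s hs
      by_cases hsP : φ s ∈ connectedComponentIn (φ '' F2) y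
      · exact Set.mem_union_left _ (hsubPV ⟨hs, hsP⟩)
      · exact Set.mem_union_right _ hsP
    obtain ⟨u, huC, huV, huP⟩ := hCp _ _ (hVo.preimage hcont)
      (hPcl.preimage hcont).isOpen_compl hcover
      ⟨a, haC, hsubPV ⟨haC, by rw [Set.mem_preimage, haφ]; exact hPy⟩⟩ ⟨v, hvC, hvP⟩
    exact huP (hCV ⟨huC, huV⟩)
  rw [Set.eq_empty_iff_forall_notMem]
  rintro z ⟨⟨v, hvC, rfl⟩, hzfr⟩
  exact Set.eq_empty_iff_forall_notMem.1 hstep2 (φ v) ⟨hzfr, hCP hvC⟩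


/-- Interior criterion at a point of `∂G₁`. -/
lemma interior_aux [T2Space F] {φ : F → G} {F1 F2 F3 : Set F}
    (h : IsSimpleFold φ F1 F2 F3) (hFg : IsGraphSpace F) {x : F}
    (h3q : (φ '' connectedComponent x ∩ frontier (φ '' F3)).Nonempty)
    {y : G} (hyD : y ∈ φ '' connectedComponent x) (hy : y ∈ frontier (φ '' F1)) :
    y ∈ interior (φ '' connectedComponent x) := by
  have hC : IsClopen (connectedComponent x) := isClopen_cc_of_graph hFg x
  obtain ⟨hcont, hcovF, hne, ⟨hreg1, hreg2, hreg3⟩, hcovG, hG2, hsep,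
    ⟨hh1, hh2, hh3⟩, hfr1, hfr3, h13⟩ := id h
  by_cases hc : ∃ c ∈ connectedComponent x, c ∈ F3 ∧ φ c = y
  · obtain ⟨c, hcC, hc3, hcφ⟩ := hc
    obtain ⟨N, hNo, hyN, hNG3, -⟩ := frontier_nbhd hcovG hG2 hsep hy
    have hyi : y ∈ interior (φ '' F3) := mem_interior.2 ⟨N, hNG3, hNo, hyN⟩
    have hres := interior_piece hh3.2 hC.2 hcC hc3 (by rw [hcφ]; exact hyi)
    rw [hcφ] at hres
    exact hres
  · push_neg at hc
    obtain ⟨x', hx'C, hx'φ⟩ := hyD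
    have hx'F : x' ∈ F1 ∪ F2 := by
      have hmem : x' ∈ F1 ∪ F2 ∪ F3 := by rw [hcovF]; trivial
      rcases hmem with h12 | h3'
      · exact h12
      · exact absurd hx'φ (hc x' hx'C h3')
    have htrap := trap h hC isPreconnected_connectedComponent hy hx'C hx'F hx'φ hc
    rw [htrap] at h3q
    exact absurd h3q Set.not_nonempty_empty

end Stmt5Aux

/-- some component of F projects onto all of G. -/
theorem stmt5 (F G : Type*) [TopologicalSpace F] [TopologicalSpace G]
    [CompactSpace F] [T2Space F] [CompactSpace G] [T2Space G] [ConnectedSpace G]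
    (hF : IsGraphSpace F) (hG : IsGraphSpace G)
    (φ : F → G) (F1 F2 F3 : Set F) (h : IsSimpleFold φ F1 F2 F3)
    (h1 : (frontier (φ '' F1)).Nonempty) (h3 : (frontier (φ '' F3)).Nonempty) :
    (∃ x : F, (φ '' connectedComponent x ∩ frontier (φ '' F1)).Nonempty ∧
      (φ '' connectedComponent x ∩ frontier (φ '' F3)).Nonempty) ∧
    ∀ x : F, (φ '' connectedComponent x ∩ frontier (φ '' F1)).Nonempty →
      (φ '' connectedComponent x ∩ frontier (φ '' F3)).Nonempty →
      φ '' connectedComponent x = Set.univ := by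
  obtain ⟨hcont, hcovF, hne, ⟨hreg1, hreg2, hreg3⟩, hcovG, hG2, hsep,
    ⟨hh1, hh2, hh3⟩, hfr1, hfr3, h13⟩ := id h
  constructor
  · -- existence of a component meeting both frontiers
    obtain ⟨p, hp⟩ := h1
    have hpG2 : p ∈ φ '' F2 := by
      have hmem : p ∈ φ '' (F1 ∩ F2) := by rw [← hfr1]; exact hp
      exact Set.image_mono Set.inter_subset_right hmem
    have hpG3 : p ∈ φ '' F3 := by
      have hmem := hpG2
      rw [hG2] at hmem
      exact hmem.2
    obtain ⟨c, hc3, hcφ⟩ := id hpG3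
    refine ⟨c, ⟨p, ⟨c, mem_connectedComponent, hcφ⟩, hp⟩, ?_⟩
    have hq : ∃ q ∈ connectedComponentIn (φ '' F3) p, q ∈ frontier (φ '' F3) := by
      by_contra hcon
      push_neg at hcon
      have hRcl : IsClosed (connectedComponentIn (φ '' F3) p) :=
        Stmt5Aux.isClosed_ccIn hreg3.1 p
      obtain ⟨U, hUo, hReq⟩ := Stmt5Aux.ccIn_relopen hreg3.1 hreg3.2.1 hpG3
      have hRo : IsOpen (connectedComponentIn (φ '' F3) p) := by
        rw [isOpen_iff_mem_nhds]
        intro z hz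
        have hz3 : z ∈ φ '' F3 := connectedComponentIn_subset _ _ hz
        have hzi : z ∈ interior (φ '' F3) := by
          by_contra hzi
          exact hcon z hz (by rw [hreg3.1.frontier_eq]; exact ⟨hz3, hzi⟩)
        have hnb : interior (φ '' F3) ∩ U ∈ nhds z := by
          refine (isOpen_interior.inter hUo).mem_nhds ⟨hzi, ?_⟩
          rw [hReq] at hz
          exact hz.1
        refine Filter.mem_of_superset hnb ?_
        intro v hv
        rw [hReq]
        exact ⟨hv.2, interior_subset hv.1⟩
      have hRuniv : connectedComponentIn (φ '' F3) p = Set.univ :=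
        IsClopen.eq_univ ⟨hRcl, hRo⟩ ⟨p, mem_connectedComponentIn hpG3⟩
      have hG3univ : φ '' F3 = Set.univ :=
        Set.eq_univ_of_univ_subset (hRuniv ▸ connectedComponentIn_subset _ _)
      rw [hG3univ, frontier_univ] at h3
      exact Set.not_nonempty_empty h3
    obtain ⟨q, hqR, hqfr⟩ := hq
    have hRt : IsPreconnected (F3 ∩ φ ⁻¹' connectedComponentIn (φ '' F3) p) :=
      Stmt5Aux.preconn_preimage hh3.2 isPreconnected_connectedComponentIn
        (connectedComponentIn_subset _ _)
    have hsub : F3 ∩ φ ⁻¹' connectedComponentIn (φ '' F3) p ⊆ connectedComponent c :=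
      hRt.subset_connectedComponent
        ⟨hc3, by rw [Set.mem_preimage, hcφ]; exact mem_connectedComponentIn hpG3⟩
    obtain ⟨v, hv3, hvφ⟩ := connectedComponentIn_subset _ _ hqR
    exact ⟨q, ⟨v, hsub ⟨hv3, by rw [Set.mem_preimage, hvφ]; exact hqR⟩, hvφ⟩, hqfr⟩
  · -- any such component maps onto G
    intro x h1q h3q
    have hC : IsClopen (connectedComponent x) := Stmt5Aux.isClopen_cc_of_graph hF x
    have hDcl : IsClosed (φ '' connectedComponent x) :=
      (isClosed_connectedComponent.isCompact.image hcont).isClosed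
    have hDo : IsOpen (φ '' connectedComponent x) := by
      rw [← subset_interior_iff_isOpen]
      intro y hy
      by_cases hfr1y : y ∈ frontier (φ '' F1)
      · exact Stmt5Aux.interior_aux h hF h3q hy hfr1y
      by_cases hfr3y : y ∈ frontier (φ '' F3)
      · exact Stmt5Aux.interior_aux (Stmt5Aux.fold_symm h) hF h1q hy hfr3y
      obtain ⟨x', hx'C, rfl⟩ := hy
      have hx'F : x' ∈ F1 ∪ F2 ∪ F3 := by rw [hcovF]; trivial
      have hint1 : φ x' ∈ φ '' F1 → φ x' ∈ interior (φ '' F1) := by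
        intro hy1
        by_contra hno
        exact hfr1y (by rw [hreg1.1.frontier_eq]; exact ⟨hy1, hno⟩)
      have hint3 : φ x' ∈ φ '' F3 → φ x' ∈ interior (φ '' F3) := by
        intro hy3
        by_contra hno
        exact hfr3y (by rw [hreg3.1.frontier_eq]; exact ⟨hy3, hno⟩)
      rcases hx'F with (hv1 | hv2) | hv3
      · exact Stmt5Aux.interior_piece hh1.2 hC.2 hx'C hv1 (hint1 ⟨x', hv1, rfl⟩)
      · have hy2 : φ x' ∈ φ '' F2 := ⟨x', hv2, rfl⟩
        have hy13 : φ x' ∈ φ '' F1 ∩ φ '' F3 := by rw [← hG2]; exact hy2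
        have hyi : φ x' ∈ interior (φ '' F2) := by
          rw [hG2, interior_inter]
          exact ⟨hint1 hy13.1, hint3 hy13.2⟩
        exact Stmt5Aux.interior_piece hh2.2 hC.2 hx'C hv2 hyi
      · exact Stmt5Aux.interior_piece hh3.2 hC.2 hx'C hv3 (hint3 ⟨x', hv3, rfl⟩)
    obtain ⟨z, hz⟩ := h1q
    exact IsClopen.eq_univ ⟨hDcl, hDo⟩ ⟨z, hz.1⟩
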